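/- Let ι be a finite nonempty index set, let λ : ι → ℝ satisfy λ i ≥ 0 and ∑ᵢ λ i = 1, let η ∈ [0, 1/2), and let p : ι → ℝ satisfy 1/2 ≤ p i ≤ 1/2 + η for all i. Let T, t be natural numbers with t ≤ 2T. Set Z := ∑ⱼ λ j · (p j)^t · (1 − p j)^{2T − t} and λ' i := λ i · (p i)^t · (1 − p i)^{2T − t} / Z. Then Z > 0 and (1/2)·∑ᵢ |λ i − λ' i| ≤ 1 − (1 − 4η²)^T · ((1 − 2η)/(1 + 2η))^{|t − T|}. -/

import Mathlib

lemma core1 (A B p q : ℝ) (k m : ℕ) (hA0 : 0 < A) (hB0 : 0 < B) (hAB : A*B ≤ 1/4)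
    (hpAB : A*B ≤ p*(1-p)) (hq14 : q*(1-q) ≤ 1/4) (hq0 : 0 ≤ q*(1-q))
    (hp : 1/2 ≤ p) (hqB : q ≤ B) (hq0' : 0 ≤ q) :
    (4*(A*B))^(k+m) * (A/B)^k * (q^(k+m+k) * (1-q)^m) ≤ p^(k+m+k) * (1-p)^m := by
  have hAB0 : 0 ≤ A*B := le_of_lt (mul_pos hA0 hB0)
  have ep : ∀ x:ℝ, x^(k+m+k) * (1-x)^m = (x*(1-x))^m * (x^2)^k := by
    intro x
    rw [show k+m+k = m+2*k from by omega, pow_add, pow_mul, mul_pow]; ring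
  rw [ep p, ep q]
  have h1 : (4*(A*B))^(k+m) * (A/B)^k * ((q*(1-q))^m * (q^2)^k)
      ≤ (4*(A*B))^(k+m) * (A/B)^k * ((1/4)^m * (B^2)^k) := by
    have hfront : (0:ℝ) ≤ (4*(A*B))^(k+m) * (A/B)^k := by positivity
    apply mul_le_mul_of_nonneg_left _ hfront
    apply mul_le_mul (pow_le_pow_left₀ hq0 hq14 m)
      (pow_le_pow_left₀ (by positivity) (by nlinarith) k) (by positivity) (by positivity)
  have h2 : (4*(A*B))^(k+m) * (A/B)^k * ((1/4)^m * (B^2)^k)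
      = (A*B)^m * ((2*(A*B))^2)^k := by
    field_simp
    rw [div_pow, one_div_pow, pow_add]
    field_simp
    ring
  have h3 : (A*B)^m * ((2*(A*B))^2)^k ≤ (A*B)^m * ((1/2:ℝ)^2)^k := by
    apply mul_le_mul_of_nonneg_left _ (pow_nonneg hAB0 m)
    apply pow_le_pow_left₀ (by positivity)
    nlinarith
  have h4 : (A*B)^m * ((1/2:ℝ)^2)^k ≤ (p*(1-p))^m * (p^2)^k := by
    apply mul_le_mul (pow_le_pow_left₀ hAB0 hpAB m)
      (pow_le_pow_left₀ (by positivity) (by nlinarith) k) (by positivity)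
      (pow_nonneg (by nlinarith) _)
  linarith

lemma core2 (A B p q : ℝ) (t k : ℕ) (hA0 : 0 < A) (hB0 : 0 < B)
    (hpAB : A*B ≤ p*(1-p)) (hq14 : q*(1-q) ≤ 1/4) (hq0 : 0 ≤ q*(1-q))
    (hAp : A ≤ 1-p) (hq12 : 1-q ≤ 1/2) (hq0' : 0 ≤ 1-q) :
    (4*(A*B))^(t+k) * (A/B)^k * (q^t * (1-q)^(t+2*k)) ≤ p^t * (1-p)^(t+2*k) := by
  have hAB0 : 0 ≤ A*B := le_of_lt (mul_pos hA0 hB0)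
  have ep : ∀ x:ℝ, x^t * (1-x)^(t+2*k) = (x*(1-x))^t * ((1-x)^2)^k := by
    intro x; rw [pow_add, pow_mul, mul_pow]; ring
  rw [ep p, ep q]
  have h1 : (4*(A*B))^(t+k) * (A/B)^k * ((q*(1-q))^t * ((1-q)^2)^k)
      ≤ (4*(A*B))^(t+k) * (A/B)^k * ((1/4)^t * ((1/2:ℝ)^2)^k) := by
    have hfront : (0:ℝ) ≤ (4*(A*B))^(t+k) * (A/B)^k := by positivity
    apply mul_le_mul_of_nonneg_left _ hfront
    apply mul_le_mul (pow_le_pow_left₀ hq0 hq14 t)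
      (pow_le_pow_left₀ (by positivity) (by nlinarith) k) (by positivity) (by positivity)
  have h2 : (4*(A*B))^(t+k) * (A/B)^k * ((1/4)^t * ((1/2:ℝ)^2)^k)
      = (A*B)^t * (A^2)^k := by
    field_simp
    rw [div_pow, one_div_pow, one_div_pow, pow_add]
    field_simp
    ring
  have h4 : (A*B)^t * (A^2)^k ≤ (p*(1-p))^t * ((1-p)^2)^k := by
    apply mul_le_mul (pow_le_pow_left₀ hAB0 hpAB t)
      (pow_le_pow_left₀ (by positivity) (by nlinarith) k) (by positivity)
      (pow_nonneg (by nlinarith) _)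
  linarith

lemma key_ratio (η : ℝ) (hη0 : 0 ≤ η) (hη1 : η < 1/2) (T t : ℕ) (ht : t ≤ 2*T)
    (p q : ℝ) (hp1 : 1/2 ≤ p) (hp2 : p ≤ 1/2 + η)
    (hq1 : 1/2 ≤ q) (hq2 : q ≤ 1/2 + η) :
    (1 - 4*η^2)^T * ((1 - 2*η)/(1 + 2*η))^(Nat.dist t T) * (q^t * (1-q)^(2*T-t))
      ≤ p^t * (1-p)^(2*T-t) := by
  have hA0 : (0:ℝ) < 1/2 - η := by linarith
  have hB0 : (0:ℝ) < 1/2 + η := by linarith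
  have hc1 : (1 - 4*η^2) = 4*((1/2-η)*(1/2+η)) := by ring
  have hc2 : (1 - 2*η)/(1 + 2*η) = (1/2-η)/(1/2+η) := by
    rw [show (1 - 2*η) = 2*(1/2 - η) by ring, show (1 + 2*η) = 2*(1/2 + η) by ring,
      mul_div_mul_left _ _ (two_ne_zero)]
  have hpAB : (1/2-η)*(1/2+η) ≤ p*(1-p) := by nlinarith
  have hqAB : (1/2-η)*(1/2+η) ≤ q*(1-q) := by nlinarith
  have hq14 : q*(1-q) ≤ 1/4 := by nlinarith
  have hq0 : 0 ≤ q*(1-q) := by nlinarith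
  rcases le_or_gt T t with h | h
  · obtain ⟨k, rfl⟩ := Nat.exists_eq_add_of_le h
    have hkT : k ≤ T := by omega
    obtain ⟨m, rfl⟩ := Nat.exists_eq_add_of_le hkT
    have e2T : 2*(k+m) - (k+m+k) = m := by omega
    have hd : Nat.dist (k+m+k) (k+m) = k := by simp [Nat.dist] <;> omega
    rw [hc1, hc2, e2T, hd]
    exact core1 _ _ p q k m hA0 hB0 (by nlinarith) hpAB hq14 hq0 hp1 hq2 (by linarith)
  · obtain ⟨k, rfl⟩ := Nat.exists_eq_add_of_le (le_of_lt h)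
    have e2T : 2*(t+k) - t = t + 2*k := by omega
    have hd : Nat.dist t (t+k) = k := by simp [Nat.dist] <;> omega
    rw [hc1, hc2, e2T, hd]
    exact core2 _ _ p q t k hA0 hB0 hpAB hq14 hq0 (by linarith) (by linarith) (by linarith)

theorem stmt_3 {ι : Type*} [Fintype ι] [Nonempty ι]
    (w p : ι → ℝ) (η : ℝ) (T t : ℕ)
    (hw0 : ∀ i, 0 ≤ w i) (hw1 : ∑ i, w i = 1)
    (hη : η ∈ Set.Ico (0 : ℝ) (1 / 2))
    (hp1 : ∀ i, 1 / 2 ≤ p i) (hp2 : ∀ i, p i ≤ 1 / 2 + η)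
    (ht : t ≤ 2 * T) :
    0 < (∑ j, w j * (p j) ^ t * (1 - p j) ^ (2 * T - t)) ∧
    (1 / 2) * ∑ i, |w i - w i * (p i) ^ t * (1 - p i) ^ (2 * T - t) /
        (∑ j, w j * (p j) ^ t * (1 - p j) ^ (2 * T - t))| ≤
      1 - (1 - 4 * η ^ 2) ^ T * ((1 - 2 * η) / (1 + 2 * η)) ^ (Nat.dist t T) := by
  obtain ⟨hη0, hη1⟩ := hη
  have hη1' : η < 1/2 := hη1
  set c : ℝ := (1 - 4 * η ^ 2) ^ T * ((1 - 2 * η) / (1 + 2 * η)) ^ (Nat.dist t T) with hc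
  set Z : ℝ := ∑ j, w j * (p j) ^ t * (1 - p j) ^ (2 * T - t) with hZdef
  have hf0 : ∀ i, 0 < (p i) ^ t * (1 - p i) ^ (2 * T - t) := by
    intro i
    have h1 := hp1 i; have h2 := hp2 i
    exact mul_pos (pow_pos (by linarith) _) (pow_pos (by linarith) _)
  have hterm0 : ∀ i, 0 ≤ w i * (p i) ^ t * (1 - p i) ^ (2 * T - t) := by
    intro i
    rw [mul_assoc]
    exact mul_nonneg (hw0 i) (le_of_lt (hf0 i))
  have hex : ∃ i, 0 < w i := by
    by_contra h
    push_neg at h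
    have : ∑ i, w i = 0 :=
      Finset.sum_eq_zero (fun i _ => le_antisymm (h i) (hw0 i))
    rw [hw1] at this
    norm_num at this
  obtain ⟨i0, hi0⟩ := hex
  have hZ0 : 0 < Z := by
    have h1 : w i0 * (p i0) ^ t * (1 - p i0) ^ (2 * T - t) ≤ Z :=
      Finset.single_le_sum (fun i _ => hterm0 i) (Finset.mem_univ i0)
    have h2 : 0 < w i0 * (p i0) ^ t * (1 - p i0) ^ (2 * T - t) := by
      rw [mul_assoc]; exact mul_pos hi0 (hf0 i0)
    linarith
  refine ⟨hZ0, ?_⟩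
  have hc0 : 0 ≤ c := by
    apply mul_nonneg (pow_nonneg (by nlinarith) T)
    exact pow_nonneg (div_nonneg (by linarith) (by linarith)) _
  have hc1 : c ≤ 1 := by
    apply mul_le_one₀ (pow_le_one₀ (by nlinarith) (by nlinarith))
      (pow_nonneg (div_nonneg (by linarith) (by linarith)) _)
    apply pow_le_one₀ (div_nonneg (by linarith) (by linarith))
    rw [div_le_one (by linarith)]
    linarith
  -- key pointwise bound : c * Z ≤ f i
  have hfZ : ∀ i, c * Z ≤ (p i) ^ t * (1 - p i) ^ (2 * T - t) := by
    intro i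
    calc c * Z = ∑ j, w j * (c * ((p j) ^ t * (1 - p j) ^ (2 * T - t))) := by
          rw [hZdef, Finset.mul_sum]
          exact Finset.sum_congr rfl (fun j _ => by ring)
      _ ≤ ∑ j, w j * ((p i) ^ t * (1 - p i) ^ (2 * T - t)) := by
          apply Finset.sum_le_sum
          intro j _
          apply mul_le_mul_of_nonneg_left _ (hw0 j)
          exact key_ratio η hη0 hη1' T t ht (p i) (p j) (hp1 i) (hp2 i) (hp1 j) (hp2 j)
      _ = (∑ j, w j) * ((p i) ^ t * (1 - p i) ^ (2 * T - t)) := by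
          rw [Finset.sum_mul]
      _ = (p i) ^ t * (1 - p i) ^ (2 * T - t) := by rw [hw1, one_mul]
  have hw' : ∀ i, c * w i ≤ w i * (p i) ^ t * (1 - p i) ^ (2 * T - t) / Z := by
    intro i
    rw [le_div_iff₀ hZ0]
    have := mul_le_mul_of_nonneg_left (hfZ i) (hw0 i)
    nlinarith []
  have hsum' : ∑ i, w i * (p i) ^ t * (1 - p i) ^ (2 * T - t) / Z = 1 := by
    rw [← Finset.sum_div, ← hZdef, div_self (ne_of_gt hZ0)]
  have habs : ∀ x : ℝ, |x| = 2 * max x 0 - x := by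
    intro x
    rcases le_total 0 x with h | h
    · rw [abs_of_nonneg h, max_eq_left h]; ring
    · rw [abs_of_nonpos h, max_eq_right h]; ring
  have hsplit : ∑ i, |w i - w i * (p i) ^ t * (1 - p i) ^ (2 * T - t) / Z|
      = 2 * ∑ i, max (w i - w i * (p i) ^ t * (1 - p i) ^ (2 * T - t) / Z) 0 := by
    calc ∑ i, |w i - w i * (p i) ^ t * (1 - p i) ^ (2 * T - t) / Z|
        = ∑ i, (2 * max (w i - w i * (p i) ^ t * (1 - p i) ^ (2 * T - t) / Z) 0
            - (w i - w i * (p i) ^ t * (1 - p i) ^ (2 * T - t) / Z)) :=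
          Finset.sum_congr rfl (fun i _ => habs _)
      _ = 2 * (∑ i, max (w i - w i * (p i) ^ t * (1 - p i) ^ (2 * T - t) / Z) 0)
            - ((∑ i, w i) - ∑ i, w i * (p i) ^ t * (1 - p i) ^ (2 * T - t) / Z) := by
          rw [Finset.sum_sub_distrib, Finset.sum_sub_distrib, Finset.mul_sum]
      _ = 2 * ∑ i, max (w i - w i * (p i) ^ t * (1 - p i) ^ (2 * T - t) / Z) 0 := by
          rw [hw1, hsum']; ring
  have hS : ∑ i, max (w i - w i * (p i) ^ t * (1 - p i) ^ (2 * T - t) / Z) 0 ≤ 1 - c := by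
    calc ∑ i, max (w i - w i * (p i) ^ t * (1 - p i) ^ (2 * T - t) / Z) 0
        ≤ ∑ i, (1 - c) * w i := by
          apply Finset.sum_le_sum
          intro i _
          apply max_le
          · have := hw' i; nlinarith [hw0 i]
          · exact mul_nonneg (by linarith) (hw0 i)
      _ = 1 - c := by rw [← Finset.mul_sum, hw1, mul_one]
  rw [hsplit]
  linarith
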